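/- A prosumer that buys from the grid at some base price never operates in the interior Mode 1 at any higher base price: there do not exist base prices w₁ < w₂ and a prosumer m ∈ U such that p_m⁺*(w₁) > 0 while at w₂ one has p_m⁺*(w₂) = 0, p_m⁻*(w₂) = 0, and 0 < p_m*(w₂) < p̄_m. -/
import Mathlib


open Finset

variable {U : Type*} [Fintype U]

/-- A point `(p, p⁺, p⁻, x)` is feasible for the L-ESM subproblem:
power balance, generator bounds, and nonnegativity of grid trades. -/
def Feasible (D pbar : U → ℝ) (p pp pm x : U → ℝ) : Prop :=
  ∀ m : U, D m + x m + pm m = p m + pp m ∧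
    0 ≤ p m ∧ p m ≤ pbar m ∧ 0 ≤ pp m ∧ 0 ≤ pm m

/-- Objective of the L-ESM subproblem at base price `w0`. -/
noncomputable def Objective (c b : U → ℝ) (wplus wminus a w0 : ℝ)
    (p pp pm x : U → ℝ) : ℝ :=
  (∑ m : U, (c m / 2 * (p m) ^ 2 + b m * p m + wplus * pp m
      - wminus * pm m - w0 * x m))
    + a / 2 * ∑ m : U, (x m) ^ 2 + a / 2 * (∑ m : U, x m) ^ 2

/-- `(p, p⁺, p⁻, x)` is an optimal solution of the L-ESM subproblem. -/
noncomputable def IsOptimal (c b D pbar : U → ℝ) (wplus wminus a w0 : ℝ)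
    (p pp pm x : U → ℝ) : Prop :=
  Feasible D pbar p pp pm x ∧
    ∀ q qp qm y : U → ℝ, Feasible D pbar q qp qm y →
      Objective c b wplus wminus a w0 p pp pm x ≤
        Objective c b wplus wminus a w0 q qp qm y

/-- a prosumer that buys from the grid at some base price never
operates in the interior Mode 1 at any higher base price. -/
lemma linear_coeff_nonneg {A B ε : ℝ} (hB : 0 ≤ B) (hε : 0 < ε)
    (h : ∀ t : ℝ, 0 < t → t ≤ ε → 0 ≤ t * A + t ^ 2 * B) : 0 ≤ A := by
  by_contra hA
  push_neg at hA
  set t := min ε (-A / (B + 1)) with ht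
  have htpos : 0 < t := lt_min hε (div_pos (neg_pos.mpr hA) (by linarith))
  have h1 := h t htpos (min_le_left _ _)
  have ht2 : t ≤ -A / (B + 1) := min_le_right _ _
  have ht3 : t * (B + 1) ≤ -A := (le_div_iff₀ (by linarith)).mp ht2
  nlinarith [mul_le_mul_of_nonneg_left ht3 htpos.le, mul_pos htpos htpos]

lemma sum_update_eq [DecidableEq U] (f : U → ℝ) (k : U) (v : ℝ) :
    ∑ m, Function.update f k v m = (∑ m, f m) - f k + v := by
  rw [Finset.sum_update_of_mem (Finset.mem_univ k),
    Finset.sum_sdiff_eq_sub (Finset.subset_univ {k}), Finset.sum_singleton]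
  ring

lemma stationarity [DecidableEq U] (c b D pbar : U → ℝ) (wplus wminus a w : ℝ)
    (hc : ∀ m, 0 < c m) (ha : 0 < a)
    (p pp pm x : U → ℝ)
    (hopt : IsOptimal c b D pbar wplus wminus a w p pp pm x)
    (k : U) (dp dpp dpm dx : ℝ) (hbal : dp + dpp = dpm + dx)
    (ε : ℝ) (hε : 0 < ε)
    (hfeas : ∀ t : ℝ, 0 < t → t ≤ ε →
      0 ≤ p k + t * dp ∧ p k + t * dp ≤ pbar k ∧
      0 ≤ pp k + t * dpp ∧ 0 ≤ pm k + t * dpm) :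
    0 ≤ dp * (c k * p k + b k) + dpp * wplus - dpm * wminus - dx * w
        + a * x k * dx + a * (∑ m, x m) * dx := by
  apply linear_coeff_nonneg (B := c k / 2 * dp ^ 2 + a * dx ^ 2) ?_ hε
  · intro t htpos htε
    set q := Function.update p k (p k + t * dp) with hq
    set qp := Function.update pp k (pp k + t * dpp) with hqp
    set qm := Function.update pm k (pm k + t * dpm) with hqm
    set y := Function.update x k (x k + t * dx) with hy
    have hfeas' : Feasible D pbar q qp qm y := by
      intro m
      by_cases hm : m = k
      · subst hm
        obtain ⟨hb1, hb2, hb3, hb4, hb5⟩ := hopt.1 m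
        obtain ⟨hf1, hf2, hf3, hf4⟩ := hfeas t htpos htε
        simp only [hq, hqp, hqm, hy, Function.update_self]
        exact ⟨by linear_combination hb1 - t * hbal, hf1, hf2, hf3, hf4⟩
      · simpa only [hq, hqp, hqm, hy, Function.update_of_ne hm] using hopt.1 m
    have hle := hopt.2 q qp qm y hfeas'
    have hobj : Objective c b wplus wminus a w q qp qm y =
        Objective c b wplus wminus a w p pp pm x +
          (t * (dp * (c k * p k + b k) + dpp * wplus - dpm * wminus - dx * w
            + a * x k * dx + a * (∑ m, x m) * dx)
           + t ^ 2 * (c k / 2 * dp ^ 2 + a * dx ^ 2)) := by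
      have hbig : (∑ m : U, (c m / 2 * (q m) ^ 2 + b m * q m + wplus * qp m
          - wminus * qm m - w * y m))
          = (∑ m : U, (c m / 2 * (p m) ^ 2 + b m * p m + wplus * pp m
              - wminus * pm m - w * x m))
            - (c k / 2 * (p k) ^ 2 + b k * p k + wplus * pp k
              - wminus * pm k - w * x k)
            + (c k / 2 * (p k + t * dp) ^ 2 + b k * (p k + t * dp)
              + wplus * (pp k + t * dpp) - wminus * (pm k + t * dpm)
              - w * (x k + t * dx)) := by
        rw [show (fun m : U => (c m / 2 * (q m) ^ 2 + b m * q m + wplus * qp m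
            - wminus * qm m - w * y m))
            = Function.update (fun m : U => c m / 2 * (p m) ^ 2 + b m * p m
                + wplus * pp m - wminus * pm m - w * x m) k
              (c k / 2 * (p k + t * dp) ^ 2 + b k * (p k + t * dp)
                + wplus * (pp k + t * dpp) - wminus * (pm k + t * dpm)
                - w * (x k + t * dx)) from ?_]
        · exact sum_update_eq _ k _
        · funext m
          by_cases hm : m = k
          · subst hm; simp [hq, hqp, hqm, hy]
          · simp [hq, hqp, hqm, hy, Function.update_of_ne hm]
      have hsq : ∑ m : U, (y m) ^ 2
          = (∑ m : U, (x m) ^ 2) - (x k) ^ 2 + (x k + t * dx) ^ 2 := by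
        rw [show (fun m : U => (y m) ^ 2)
            = Function.update (fun m : U => (x m) ^ 2) k ((x k + t * dx) ^ 2) from ?_]
        · exact sum_update_eq _ k _
        · funext m
          by_cases hm : m = k
          · subst hm; simp [hy]
          · simp [hy, Function.update_of_ne hm]
      have hs : ∑ m : U, y m = (∑ m : U, x m) - x k + (x k + t * dx) :=
        sum_update_eq x k _
      unfold Objective
      rw [hbig, hsq, hs]
      ring
    rw [hobj] at hle
    linarith
  · have := (hc k).le
    positivity

theorem lesm_no_buy_then_mode1 [Nonempty U]
    (c b D pbar : U → ℝ) (wplus wminus a : ℝ)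
    (hc : ∀ m, 0 < c m) (hpbar : ∀ m, 0 ≤ pbar m)
    (hb : ∀ m, 0 < b m) (hbw : ∀ m, b m < wminus)
    (hw : wminus < wplus) (ha : 0 < a)
    (pstar ppstar pmstar xstar : ℝ → U → ℝ)
    (hopt : ∀ w0 : ℝ, IsOptimal c b D pbar wplus wminus a w0
      (pstar w0) (ppstar w0) (pmstar w0) (xstar w0)) :
    ¬ ∃ (w1 w2 : ℝ) (m : U), w1 < w2 ∧
      0 < ppstar w1 m ∧
      ppstar w2 m = 0 ∧ pmstar w2 m = 0 ∧
      0 < pstar w2 m ∧ pstar w2 m < pbar m := by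
  classical
  rintro ⟨w1, w2, m, hw12, hpp1, hpp2, hpm2, hp2pos, hp2lt⟩
  -- shadow price γ w k = w - a * x k - a * S
  set g : ℝ → U → ℝ := fun w k =>
    w - a * xstar w k - a * (∑ j, xstar w j) with hg
  -- Fact 1a : g w k ≤ wplus
  have hF1a : ∀ w k, g w k ≤ wplus := by
    intro w k
    have := stationarity c b D pbar wplus wminus a w hc ha _ _ _ _ (hopt w) k
      0 1 0 1 (by norm_num) 1 one_pos (fun t ht _ => by
        obtain ⟨_, h2, h3, h4, h5⟩ := (hopt w).1 k
        constructor
        · linarith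
        constructor
        · linarith
        constructor
        · linarith
        · linarith)
    simp only [hg]
    linarith
  -- Fact 1b : wminus ≤ g w k
  have hF1b : ∀ w k, wminus ≤ g w k := by
    intro w k
    have := stationarity c b D pbar wplus wminus a w hc ha _ _ _ _ (hopt w) k
      0 0 1 (-1) (by norm_num) 1 one_pos (fun t ht _ => by
        obtain ⟨_, h2, h3, h4, h5⟩ := (hopt w).1 k
        exact ⟨by linarith, by linarith, by linarith, by linarith⟩)
    simp only [hg]
    linarith
  -- Fact 2 : buying pins g at wplus
  have hF2 : ∀ w k, 0 < ppstar w k → wplus ≤ g w k := by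
    intro w k hppk
    have := stationarity c b D pbar wplus wminus a w hc ha _ _ _ _ (hopt w) k
      0 (-1) 0 (-1) (by norm_num) (ppstar w k) hppk (fun t ht htε => by
        obtain ⟨_, h2, h3, h4, h5⟩ := (hopt w).1 k
        exact ⟨by linarith, by linarith, by linarith, by linarith⟩)
    simp only [hg]
    linarith
  -- Fact 3 : selling pins g at wminus
  have hF3 : ∀ w k, 0 < pmstar w k → g w k ≤ wminus := by
    intro w k hpmk
    have := stationarity c b D pbar wplus wminus a w hc ha _ _ _ _ (hopt w) k
      0 0 (-1) 1 (by norm_num) (pmstar w k) hpmk (fun t ht htε => by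
        obtain ⟨_, h2, h3, h4, h5⟩ := (hopt w).1 k
        exact ⟨by linarith, by linarith, by linarith, by linarith⟩)
    simp only [hg]
    linarith
  -- Fact 4 : positive production gives marginal cost ≤ g
  have hF4 : ∀ w k, 0 < pstar w k → c k * pstar w k + b k ≤ g w k := by
    intro w k hpk
    have := stationarity c b D pbar wplus wminus a w hc ha _ _ _ _ (hopt w) k
      (-1) 0 0 (-1) (by norm_num) (pstar w k) hpk (fun t ht htε => by
        obtain ⟨_, h2, h3, h4, h5⟩ := (hopt w).1 k
        exact ⟨by linarith, by linarith, by linarith, by linarith⟩)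
    simp only [hg]
    linarith
  -- Fact 5 : production below capacity gives g ≤ marginal cost
  have hF5 : ∀ w k, pstar w k < pbar k → g w k ≤ c k * pstar w k + b k := by
    intro w k hpk
    have := stationarity c b D pbar wplus wminus a w hc ha _ _ _ _ (hopt w) k
      1 0 0 1 (by norm_num) (pbar k - pstar w k) (by linarith) (fun t ht htε => by
        obtain ⟨_, h2, h3, h4, h5⟩ := (hopt w).1 k
        exact ⟨by linarith, by linarith, by linarith, by linarith⟩)
    simp only [hg]
    linarith
  -- Fact 6 : never buy and sell simultaneously
  have hF6 : ∀ w k, ¬(0 < ppstar w k ∧ 0 < pmstar w k) := by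
    rintro w k ⟨h1, h2⟩
    have := stationarity c b D pbar wplus wminus a w hc ha _ _ _ _ (hopt w) k
      0 (-1) (-1) 0 (by norm_num) (min (ppstar w k) (pmstar w k))
      (lt_min h1 h2) (fun t ht htε => by
        obtain ⟨_, hb2, hb3, hb4, hb5⟩ := (hopt w).1 k
        refine ⟨by linarith, by linarith, ?_, ?_⟩
        · have := le_trans htε (min_le_left (ppstar w k) (pmstar w k))
          linarith
        · have := le_trans htε (min_le_right (ppstar w k) (pmstar w k))
          linarith)
    linarith
  -- balance as an equation for x
  have hbalx : ∀ w k, xstar w k =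
      pstar w k + ppstar w k - pmstar w k - D k := by
    intro w k
    have := ((hopt w).1 k).1
    linarith
  -- derived facts about m
  have hg1m : g w1 m = wplus := le_antisymm (hF1a w1 m) (hF2 w1 m hpp1)
  have hg2m : g w2 m = c m * pstar w2 m + b m :=
    le_antisymm (hF5 w2 m hp2lt) (hF4 w2 m hp2pos)
  have hpm1 : pmstar w1 m = 0 := by
    by_contra hne
    exact hF6 w1 m ⟨hpp1, lt_of_le_of_ne ((hopt w1).1 m).2.2.2.2 (Ne.symm hne)⟩
  have hp21 : pstar w2 m ≤ pstar w1 m := by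
    by_cases hp1 : pstar w1 m < pbar m
    · have h5 := hF5 w1 m hp1
      have h2 := hF1a w2 m
      rw [hg1m] at h5
      rw [hg2m] at h2
      have : c m * pstar w2 m ≤ c m * pstar w1 m := by linarith
      exact le_of_mul_le_mul_left this (hc m)
    · push_neg at hp1
      linarith
  have hxm : xstar w2 m < xstar w1 m := by
    rw [hbalx w1 m, hbalx w2 m, hpm1, hpp2, hpm2]
    linarith
  -- main case analysis
  set S1 := ∑ j, xstar w1 j with hS1
  set S2 := ∑ j, xstar w2 j with hS2
  by_cases hcase : a * (S2 - S1) ≤ w2 - w1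
  · -- then Δx_m ≥ 0, contradicting hxm
    have hΔγ : g w2 m ≤ g w1 m := by rw [hg1m]; exact hF1a w2 m
    have hid : a * (xstar w2 m - xstar w1 m)
        = (w2 - w1) - (g w2 m - g w1 m) - a * (S2 - S1) := by
      simp only [hg, hS1, hS2]; ring
    nlinarith [mul_pos ha (sub_pos.mpr hxm)]
  · push_neg at hcase
    have hmono : ∀ k, xstar w2 k ≤ xstar w1 k := by
      intro k
      by_contra hk
      push_neg at hk
      have hid : a * (xstar w2 k - xstar w1 k)
          = (w2 - w1) - (g w2 k - g w1 k) - a * (S2 - S1) := by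
        simp only [hg, hS1, hS2]; ring
      by_cases hγ : g w1 k ≤ g w2 k
      · nlinarith [mul_pos ha (sub_pos.mpr hk)]
      · push_neg at hγ
        have hpp2k : ppstar w2 k ≤ 0 := by
          by_contra hne
          push_neg at hne
          have := hF2 w2 k hne
          have := hF1a w1 k
          linarith
        have hpm1k : pmstar w1 k ≤ 0 := by
          by_contra hne
          push_neg at hne
          have := hF3 w1 k hne
          have := hF1b w2 k
          linarith
        have hb1 := (hopt w1).1 k
        have hb2 := (hopt w2).1 k
        have hp12 : pstar w1 k < pstar w2 k := by
          have e1 := hbalx w1 k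
          have e2 := hbalx w2 k
          have := hb1.2.2.2.1  -- 0 ≤ pp1
          have := hb2.2.2.2.2  -- 0 ≤ pm2
          linarith
        have hp2kpos : 0 < pstar w2 k := lt_of_le_of_lt hb1.2.1 hp12
        have h4 := hF4 w2 k hp2kpos
        have h5 := hF5 w1 k (lt_of_lt_of_le hp12 hb2.2.2.1)
        nlinarith [mul_pos (hc k) (sub_pos.mpr hp12)]
    have hS : S2 ≤ S1 := Finset.sum_le_sum (fun k _ => hmono k)
    nlinarith [mul_nonneg ha.le (sub_nonneg.mpr hS)]
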